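/- Let T be a finite tree and U a set of vertices of T. If there exist a 2-dominating set D' of the induced subgraph T[U] and a 2-independent set S' of T[U] such that |D'| < |S'| and no vertex of S' is adjacent in T to a vertex outside U, then γ₂(T) < α₂(T). -/

import Mathlib

open SimpleGraph

/-- `S` is a `k`-dominating set of the subgraph of `G` induced by `U`:
`S ⊆ U` and every vertex of `U` not in `S` has at least `k` neighbors in `S`. -/
def IsKDomOn {V : Type*} (G : SimpleGraph V) (k : ℕ) (U S : Set V) : Prop :=
  S ⊆ U ∧ ∀ v ∈ U, v ∉ S → k ≤ (G.neighborSet v ∩ S).ncard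

/-- `S` is a `k`-independent set of the subgraph of `G` induced by `U`:
`S ⊆ U` and every vertex of `S` has at most `k - 1` neighbors in `S`. -/
def IsKIndOn {V : Type*} (G : SimpleGraph V) (k : ℕ) (U S : Set V) : Prop :=
  S ⊆ U ∧ ∀ v ∈ S, (G.neighborSet v ∩ S).ncard ≤ k - 1

/-- The `k`-domination number of the subgraph of `G` induced by `U`. -/
noncomputable def gammaK {V : Type*} (G : SimpleGraph V) (k : ℕ) (U : Set V) : ℕ :=
  sInf {n | ∃ S, IsKDomOn G k U S ∧ S.ncard = n}

/-- The `k`-independence number of the subgraph of `G` induced by `U`. -/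
noncomputable def alphaK {V : Type*} (G : SimpleGraph V) (k : ℕ) (U : Set V) : ℕ :=
  sSup {n | ∃ S, IsKIndOn G k U S ∧ S.ncard = n}

open Finset in
/-- Every finite graph has, on any vertex set `W`, a set that is simultaneously
2-dominating and 2-independent (Favaron-type theorem, `k = 2`). -/
lemma exists_two_dom_and_ind {V : Type*} [Fintype V] (G : SimpleGraph V) (W : Set V) :
    ∃ B : Set V, IsKDomOn G 2 W B ∧ IsKIndOn G 2 W B := by
  classical
  set C := Fintype.card V with hC
  let nf : V → Finset V := fun v => G.neighborFinset v
  let P : Finset V → Prop := fun s => ∀ x ∈ s, (nf x ∩ s).card ≤ 1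
  let φ : Finset V → ℕ := fun s => ∑ x ∈ s, (nf x ∩ s).card
  let f : Finset V → ℕ := fun s => (C + 1) * s.card - φ s
  have hφ_le : ∀ s, P s → φ s ≤ s.card := by
    intro s hs
    calc φ s ≤ ∑ _x ∈ s, 1 := Finset.sum_le_sum hs
      _ = s.card := by simp
  have hcard_le : ∀ s : Finset V, s.card ≤ C := fun s => Finset.card_le_univ s
  -- lexicographic comparison lemmas
  have hlex1 : ∀ s t : Finset V, P t → s.card < t.card → f s < f t := by
    intro s t ht hlt
    have h2 : φ t ≤ t.card := hφ_le t ht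
    have h4 : t.card ≤ C := hcard_le t
    have h6 : φ t ≤ C := le_trans h2 h4
    have h5 : (C + 1) * (s.card + 1) ≤ (C + 1) * t.card := Nat.mul_le_mul_left _ hlt
    calc f s ≤ (C + 1) * s.card := Nat.sub_le _ _
      _ < (C + 1) * s.card + ((C + 1) - φ t) :=
          Nat.lt_add_of_pos_right (Nat.sub_pos_of_lt (Nat.lt_succ_of_le h6))
      _ = (C + 1) * s.card + (C + 1) - φ t :=
          (Nat.add_sub_assoc (Nat.le_succ_of_le h6) _).symm
      _ = (C + 1) * (s.card + 1) - φ t := by rw [Nat.mul_succ]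
      _ ≤ (C + 1) * t.card - φ t := Nat.sub_le_sub_right h5 _
  have hlex2 : ∀ s t : Finset V, P s → s.card = t.card → φ t < φ s → f s < f t := by
    intro s t hs hcard hφ
    have hφsM : φ s ≤ (C + 1) * s.card := by
      calc φ s ≤ s.card := hφ_le s hs
        _ ≤ (C + 1) * s.card := Nat.le_mul_of_pos_left _ (Nat.succ_pos C)
    have : (C + 1) * s.card - φ s < (C + 1) * s.card - φ t :=
      Nat.sub_lt_sub_left (lt_of_lt_of_le hφ hφsM) hφ
    simpa [f, hcard] using this
  -- choose an extremal 2-independent subset of W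
  let 𝒮 : Finset (Finset V) := W.toFinset.powerset.filter P
  have hne : 𝒮.Nonempty := ⟨∅, by simp [𝒮, P]⟩
  obtain ⟨s, hsmem, hsmax⟩ := 𝒮.exists_max_image f hne
  have hsmem' := Finset.mem_filter.mp hsmem
  have hsubf : s ⊆ W.toFinset := Finset.mem_powerset.mp hsmem'.1
  have hsub : (↑s : Set V) ⊆ W := by
    intro x hx
    exact Set.mem_toFinset.mp (hsubf hx)
  have hind : P s := hsmem'.2
  have hmemS : ∀ t : Finset V, t ⊆ W.toFinset → P t → f t ≤ f s := by
    intro t h1 h2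
    exact hsmax t (Finset.mem_filter.mpr ⟨Finset.mem_powerset.mpr h1, h2⟩)
  have hkey : ∀ v : V, G.neighborSet v ∩ (↑s : Set V) = ↑(nf v ∩ s) := by
    intro v
    rw [Finset.coe_inter]
    congr 1
    simp [nf, neighborFinset_def]
  refine ⟨↑s, ⟨hsub, ?_⟩, ⟨hsub, ?_⟩⟩
  · -- 2-dominating
    intro v hvW hvs
    rw [hkey, Set.ncard_coe_finset]
    by_contra hlt
    push_neg at hlt
    have hA1 : (nf v ∩ s).card ≤ 1 := by omega
    have hvns : v ∉ s := fun h => hvs h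
    have hvnnf : v ∉ nf v := G.notMem_neighborFinset_self v
    have hvWf : v ∈ W.toFinset := Set.mem_toFinset.mpr hvW
    rcases Finset.eq_empty_or_nonempty (nf v ∩ s) with hA | ⟨u, hu⟩
    · -- v has no neighbor in s : insert it
      have hPt : P (insert v s) := by
        intro x hx
        rcases Finset.mem_insert.mp hx with rfl | hxs
        · rw [Finset.inter_insert_of_notMem hvnnf, hA]
          simp
        · have hvnx : v ∉ nf x := by
            intro hv
            have : x ∈ nf v ∩ s :=
              Finset.mem_inter.mpr ⟨(G.mem_neighborFinset v x).mpr
                (G.adj_symm ((G.mem_neighborFinset x v).mp hv)), hxs⟩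
            simp [hA] at this
          rw [Finset.inter_insert_of_notMem hvnx]
          exact hind x hxs
      have hflt : f s < f (insert v s) :=
        hlex1 s _ hPt (by rw [Finset.card_insert_of_notMem hvns]; omega)
      exact absurd (hmemS _ (Finset.insert_subset hvWf hsubf) hPt) (not_le.mpr hflt)
    · have hAeq : nf v ∩ s = {u} := by
        apply Finset.eq_singleton_iff_unique_mem.mpr
        exact ⟨hu, fun b hb => Finset.card_le_one.mp hA1 b hb u hu⟩
      have hus : u ∈ s := (Finset.mem_inter.mp hu).2
      have hadjvu : G.Adj v u := (G.mem_neighborFinset v u).mp (Finset.mem_inter.mp hu).1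
      rcases Finset.eq_empty_or_nonempty (nf u ∩ s) with hE | hE
      · -- u has no neighbor in s : insert v
        have hPt : P (insert v s) := by
          intro x hx
          rcases Finset.mem_insert.mp hx with rfl | hxs
          · rw [Finset.inter_insert_of_notMem hvnnf, hAeq]
            simp
          · by_cases hvx : v ∈ nf x
            · have hxu : x = u := by
                have : x ∈ nf v ∩ s :=
                  Finset.mem_inter.mpr ⟨(G.mem_neighborFinset v x).mpr
                    (G.adj_symm ((G.mem_neighborFinset x v).mp hvx)), hxs⟩
                rw [hAeq] at this
                exact Finset.mem_singleton.mp this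
              subst hxu
              have : nf x ∩ insert v s = insert v (nf x ∩ s) := by
                ext y
                simp only [Finset.mem_inter, Finset.mem_insert]
                constructor
                · rintro ⟨hy1, rfl | hy2⟩
                  · exact Or.inl rfl
                  · exact Or.inr ⟨hy1, hy2⟩
                · rintro (rfl | ⟨hy1, hy2⟩)
                  · exact ⟨hvx, Or.inl rfl⟩
                  · exact ⟨hy1, Or.inr hy2⟩
              rw [this, hE]
              simp
            · rw [Finset.inter_insert_of_notMem hvx]
              exact hind x hxs
        have hflt : f s < f (insert v s) :=
          hlex1 s _ hPt (by rw [Finset.card_insert_of_notMem hvns]; omega)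
        exact absurd (hmemS _ (Finset.insert_subset hvWf hsubf) hPt) (not_le.mpr hflt)
      · -- u has a neighbor in s : swap u for v
        set t : Finset V := insert v (s.erase u) with htdef
        have hvnet : v ∉ s.erase u := fun h => hvns (Finset.mem_of_mem_erase h)
        have hcards : t.card = s.card := by
          rw [htdef, Finset.card_insert_of_notMem hvnet, Finset.card_erase_of_mem hus]
          have : 1 ≤ s.card := Finset.card_pos.mpr ⟨u, hus⟩
          omega
        have hsubt : ∀ x ∈ s.erase u, nf x ∩ t ⊆ nf x ∩ s := by
          intro x hx y hy
          obtain ⟨hy1, hy2⟩ := Finset.mem_inter.mp hy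
          rcases Finset.mem_insert.mp hy2 with hyv | hy3
          · exfalso
            have hvx : v ∈ nf x := hyv ▸ hy1
            have : x ∈ nf v ∩ s :=
              Finset.mem_inter.mpr ⟨(G.mem_neighborFinset v x).mpr
                (G.adj_symm ((G.mem_neighborFinset x v).mp hvx)), Finset.mem_of_mem_erase hx⟩
            rw [hAeq] at this
            exact (Finset.mem_erase.mp hx).1 (Finset.mem_singleton.mp this)
          · exact Finset.mem_inter.mpr ⟨hy1, Finset.mem_of_mem_erase hy3⟩
        have hvt0 : nf v ∩ t = ∅ := by
          ext y
          simp only [Finset.mem_inter, htdef, Finset.mem_insert, Finset.mem_erase,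
            Finset.notMem_empty, iff_false, not_and]
          rintro hy1 (rfl | ⟨hyu, hys⟩)
          · exact hvnnf hy1
          · exact hyu (Finset.mem_singleton.mp (hAeq ▸ Finset.mem_inter.mpr ⟨hy1, hys⟩))
        have hPt : P t := by
          intro x hx
          rcases Finset.mem_insert.mp hx with rfl | hxs
          · rw [show nf x ∩ t = ∅ from hvt0]
            simp
          · calc (nf x ∩ t).card ≤ (nf x ∩ s).card :=
                Finset.card_le_card (hsubt x hxs)
              _ ≤ 1 := hind x (Finset.mem_of_mem_erase hxs)
        have hφlt : φ t < φ s := by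
          have h3 : ∑ x ∈ s.erase u, (nf x ∩ t).card ≤ ∑ x ∈ s.erase u, (nf x ∩ s).card :=
            Finset.sum_le_sum fun x hx => Finset.card_le_card (hsubt x hx)
          have h4 : 1 ≤ (nf u ∩ s).card := Finset.card_pos.mpr hE
          have h2 : (nf u ∩ s).card + ∑ x ∈ s.erase u, (nf x ∩ s).card
              = ∑ x ∈ s, (nf x ∩ s).card :=
            Finset.add_sum_erase s (fun x => (nf x ∩ s).card) hus
          have h1 : ∑ x ∈ t, (nf x ∩ t).card
              = (nf v ∩ t).card + ∑ x ∈ s.erase u, (nf x ∩ t).card := by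
            rw [htdef]
            exact Finset.sum_insert hvnet
          have h0t : φ t = ∑ x ∈ t, (nf x ∩ t).card := rfl
          have h0s : φ s = ∑ x ∈ s, (nf x ∩ s).card := rfl
          rw [h0t, h0s, h1, hvt0]
          simp only [Finset.card_empty, zero_add]
          omega
        have hflt : f s < f t := hlex2 s t hind hcards.symm hφlt
        have htsub : t ⊆ W.toFinset :=
          Finset.insert_subset hvWf ((Finset.erase_subset _ _).trans hsubf)
        exact absurd (hmemS t htsub hPt) (not_le.mpr hflt)
  · -- 2-independent
    intro v hv
    rw [hkey, Set.ncard_coe_finset]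
    exact hind v hv

theorem stmt5 {V : Type*} [Fintype V] (T : SimpleGraph V) (hT : T.IsTree)
    (U : Set V) (D' S' : Set V)
    (hD' : IsKDomOn T 2 U D') (hS' : IsKIndOn T 2 U S')
    (hcard : D'.ncard < S'.ncard)
    (hbd : ∀ v ∈ S', ∀ w ∉ U, ¬ T.Adj v w) :
    gammaK T 2 Set.univ < alphaK T 2 Set.univ := by
  classical
  obtain ⟨B, hBdom, hBind⟩ := exists_two_dom_and_ind T Uᶜ
  set D : Set V := D' ∪ B with hDdef
  set S : Set V := S' ∪ B with hSdef
  have hDdom : IsKDomOn T 2 Set.univ D := by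
    refine ⟨Set.subset_univ _, ?_⟩
    intro v _ hv
    have hv1 : v ∉ D' := fun h => hv (Or.inl h)
    have hv2 : v ∉ B := fun h => hv (Or.inr h)
    by_cases hvU : v ∈ U
    · refine le_trans (hD'.2 v hvU hv1) (Set.ncard_le_ncard ?_ (Set.toFinite _))
      exact Set.inter_subset_inter_right _ Set.subset_union_left
    · refine le_trans (hBdom.2 v hvU hv2) (Set.ncard_le_ncard ?_ (Set.toFinite _))
      exact Set.inter_subset_inter_right _ Set.subset_union_right
  have hSind : IsKIndOn T 2 Set.univ S := by
    refine ⟨Set.subset_univ _, ?_⟩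
    intro v hv
    rcases hv with hv | hv
    · have hNB : T.neighborSet v ∩ B = ∅ := by
        ext y
        simp only [Set.mem_inter_iff, mem_neighborSet, Set.mem_empty_iff_false, iff_false,
          not_and]
        intro hadj hyB
        exact hbd v hv y (hBind.1 hyB) hadj
      have heq : T.neighborSet v ∩ S = T.neighborSet v ∩ S' := by
        rw [hSdef, Set.inter_union_distrib_left, hNB, Set.union_empty]
      rw [heq]
      exact hS'.2 v hv
    · have hNS' : T.neighborSet v ∩ S' = ∅ := by
        ext y
        simp only [Set.mem_inter_iff, mem_neighborSet, Set.mem_empty_iff_false, iff_false,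
          not_and]
        intro hadj hyS'
        exact hbd y hyS' v (hBind.1 hv) (T.adj_symm hadj)
      have heq : T.neighborSet v ∩ S = T.neighborSet v ∩ B := by
        rw [hSdef, Set.inter_union_distrib_left, hNS', Set.empty_union]
      rw [heq]
      exact hBind.2 v hv
  have hdisjD : Disjoint D' B :=
    Set.disjoint_left.mpr fun x hx1 hx2 => (hBind.1 hx2) (hD'.1 hx1)
  have hdisjS : Disjoint S' B :=
    Set.disjoint_left.mpr fun x hx1 hx2 => (hBind.1 hx2) (hS'.1 hx1)
  have hDcard : D.ncard = D'.ncard + B.ncard :=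
    Set.ncard_union_eq hdisjD (Set.toFinite _) (Set.toFinite _)
  have hScard : S.ncard = S'.ncard + B.ncard :=
    Set.ncard_union_eq hdisjS (Set.toFinite _) (Set.toFinite _)
  have h1 : gammaK T 2 Set.univ ≤ D.ncard := Nat.sInf_le ⟨D, hDdom, rfl⟩
  have h2 : S.ncard ≤ alphaK T 2 Set.univ := by
    apply le_csSup
    · refine ⟨Fintype.card V, ?_⟩
      rintro n ⟨S₀, _, rfl⟩
      calc S₀.ncard ≤ (Set.univ : Set V).ncard :=
            Set.ncard_le_ncard (Set.subset_univ _) (Set.toFinite _)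
        _ = Fintype.card V := by simp [Set.ncard_univ]
    · exact ⟨S, hSind, rfl⟩
  omega
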